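/- (Reverse Hardy–Littlewood inequality for polarization.) Let p ∈ (1, ∞), let H be an open affine half-space in ℝ^N with 0 ∈ closure(H), and let Ω ⊂ ℝ^N be a bounded open set satisfying Ω = Ω_H. Let v, w ∈ L^p(Ω) be such that v·w is integrable on Ω, w is nonnegative a.e. on Ω, and the product v^H·w_H of the dual polarization of v with the polarization of w is integrable on Ω. Then ∫_Ω v^H(x) w_H(x) dx ≤ ∫_Ω v(x) w(x) dx. -/

import Mathlib

open MeasureTheory
open scoped RealInnerProductSpace ENNReal

/-- Reflection of `ℝ^N` across the hyperplane `{x : ⟪x, u⟫ = c}` (for a unit vector `u`). -/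
noncomputable def reflHyp {N : ℕ} (u : EuclideanSpace ℝ (Fin N)) (c : ℝ)
    (x : EuclideanSpace ℝ (Fin N)) : EuclideanSpace ℝ (Fin N) :=
  x - (2 * (⟪x, u⟫ - c)) • u

/-- The open affine half-space `{x : ⟪x, u⟫ < c}`. -/
def halfSpace {N : ℕ} (u : EuclideanSpace ℝ (Fin N)) (c : ℝ) :
    Set (EuclideanSpace ℝ (Fin N)) :=
  {x | ⟪x, u⟫ < c}

/-- Polarization of a set `Ω` with respect to the half-space `H = halfSpace u c`:
`Ω_H = ((Ω ∪ σ_H(Ω)) ∩ H) ∪ (Ω ∩ σ_H(Ω))`. -/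
noncomputable def polSet {N : ℕ} (u : EuclideanSpace ℝ (Fin N)) (c : ℝ)
    (Ω : Set (EuclideanSpace ℝ (Fin N))) : Set (EuclideanSpace ℝ (Fin N)) :=
  ((Ω ∪ reflHyp u c '' Ω) ∩ halfSpace u c) ∪ (Ω ∩ reflHyp u c '' Ω)

/-- Polarization of a function `f : ℝ^N → ℝ` with respect to `H = halfSpace u c`:
`f_H(x) = max (f x) (f (σ_H x))` if `x ∈ H`, and `f_H(x) = min (f x) (f (σ_H x))` otherwise. -/
noncomputable def polFun {N : ℕ} (u : EuclideanSpace ℝ (Fin N)) (c : ℝ)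
    (f : EuclideanSpace ℝ (Fin N) → ℝ) (x : EuclideanSpace ℝ (Fin N)) : ℝ :=
  if ⟪x, u⟫ < c then max (f x) (f (reflHyp u c x))
  else min (f x) (f (reflHyp u c x))

section aux
variable {N : ℕ} (u : EuclideanSpace ℝ (Fin N)) (c : ℝ)

lemma reflHyp_inner (hu : ‖u‖ = 1) (x : EuclideanSpace ℝ (Fin N)) :
    ⟪reflHyp u c x, u⟫ = 2 * c - ⟪x, u⟫ := by
  have huu : ⟪u, u⟫ = (1:ℝ) := by
    rw [real_inner_self_eq_norm_sq, hu]; norm_num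
  rw [reflHyp, inner_sub_left, real_inner_smul_left, huu]
  ring

lemma reflHyp_invol (hu : ‖u‖ = 1) (x : EuclideanSpace ℝ (Fin N)) :
    reflHyp u c (reflHyp u c x) = x := by
  have h := reflHyp_inner u c hu x
  simp only [reflHyp] at h ⊢
  rw [h]
  module

lemma reflHyp_continuous : Continuous (reflHyp u c) := by
  unfold reflHyp
  fun_prop

lemma reflHyp_measurePreserving (hu : ‖u‖ = 1) :
    MeasurePreserving (reflHyp u c) (volume : Measure (EuclideanSpace ℝ (Fin N))) volume := by
  have huu : ⟪u, u⟫ = (1:ℝ) := by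
    rw [real_inner_self_eq_norm_sq, hu]; norm_num
  have hL : ∀ x, (((ℝ ∙ u)ᗮ).reflection x : EuclideanSpace ℝ (Fin N))
      = x - (2 * ⟪x, u⟫) • u := by
    intro x
    rw [Submodule.reflection_apply]
    simp only [Submodule.starProjection_orthogonal_val,
      Submodule.starProjection_unit_singleton ℝ hu]
    rw [real_inner_comm]
    module
  have : reflHyp u c = (fun y => y + (2 * c) • u) ∘ (((ℝ ∙ u)ᗮ).reflection) := by
    funext x
    simp only [Function.comp_apply, hL x, reflHyp]
    module
  rw [this]
  exact (measurePreserving_add_right volume ((2*c) • u)).comp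
    (((ℝ ∙ u)ᗮ).reflection).measurePreserving

end aux

lemma rearr (a a' b b' : ℝ) : min a a' * max b b' + max a a' * min b b' ≤ a * b + a' * b' := by
  rcases le_total a a' with h | h <;> rcases le_total b b' with h' | h' <;>
    simp only [min_def, max_def] <;> split_ifs <;> nlinarith

/-- (Reverse Hardy–Littlewood inequality for polarization.) For `p ∈ (1, ∞)`,
a half-space `H` with `0 ∈ closure H`, a bounded open `Ω` with `Ω = Ω_H`, and `v, w ∈ L^p(Ω)`
with `v·w` integrable on `Ω`, `w` nonnegative a.e. on `Ω` and `v^H·w_H` integrable on `Ω`,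
one has `∫_Ω v^H w_H ≤ ∫_Ω v w`, where `v^H = v_H ∘ σ_H` is the dual polarization. -/
theorem polFun_reverse_hardy_littlewood {N : ℕ} (p : ℝ≥0∞) (hp1 : 1 < p) (hptop : p ≠ ⊤)
    (u : EuclideanSpace ℝ (Fin N)) (hu : ‖u‖ = 1) (c : ℝ)
    (h0 : (0 : EuclideanSpace ℝ (Fin N)) ∈ closure (halfSpace u c))
    (Ω : Set (EuclideanSpace ℝ (Fin N))) (hbdd : Bornology.IsBounded Ω) (hopen : IsOpen Ω)
    (hΩ : Ω = polSet u c Ω)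
    (v w : EuclideanSpace ℝ (Fin N) → ℝ)
    (hv : MemLp v p (volume.restrict Ω)) (hw : MemLp w p (volume.restrict Ω))
    (hvw : Integrable (fun x => v x * w x) (volume.restrict Ω))
    (hwpos : ∀ᵐ x ∂volume.restrict Ω, 0 ≤ w x)
    (hvwH : Integrable
      (fun x => polFun u c (Ω.indicator v) (reflHyp u c x) * polFun u c (Ω.indicator w) x)
      (volume.restrict Ω)) :
    ∫ x in Ω, polFun u c (Ω.indicator v) (reflHyp u c x) * polFun u c (Ω.indicator w) x ≤
      ∫ x in Ω, v x * w x := by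
  classical
  have hmeasΩ : MeasurableSet Ω := hopen.measurableSet
  set σf := reflHyp u c with hσdef
  have hinv : ∀ x, σf (σf x) = x := reflHyp_invol u c hu
  have hinner : ∀ x, ⟪σf x, u⟫ = 2 * c - ⟪x, u⟫ := reflHyp_inner u c hu
  have hmp : MeasurePreserving σf volume volume := reflHyp_measurePreserving u c hu
  let e : EuclideanSpace ℝ (Fin N) ≃ᵐ EuclideanSpace ℝ (Fin N) :=
    { toFun := σf, invFun := σf, left_inv := hinv, right_inv := hinv,
      measurable_toFun := (reflHyp_continuous u c).measurable,
      measurable_invFun := (reflHyp_continuous u c).measurable }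
  set vt := Ω.indicator v with hvt
  set wt := Ω.indicator w with hwt
  set F : EuclideanSpace ℝ (Fin N) → ℝ :=
    Ω.indicator (fun x => polFun u c vt (σf x) * polFun u c wt x) with hF
  set G : EuclideanSpace ℝ (Fin N) → ℝ := Ω.indicator (fun x => v x * w x) with hG
  have hFint : Integrable F volume := (integrable_indicator_iff hmeasΩ).2 hvwH
  have hGint : Integrable G volume := (integrable_indicator_iff hmeasΩ).2 hvw
  have hFσint : Integrable (fun x => F (σf x)) volume :=
    (hmp.integrable_comp_emb e.measurableEmbedding).2 hFint
  have hGσint : Integrable (fun x => G (σf x)) volume :=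
    (hmp.integrable_comp_emb e.measurableEmbedding).2 hGint
  have hFeq : ∫ x, F (σf x) = ∫ x, F x := hmp.integral_comp e.measurableEmbedding F
  have hGeq : ∫ x, G (σf x) = ∫ x, G x := hmp.integral_comp e.measurableEmbedding G
  have hwt0 : ∀ᵐ x ∂(volume : Measure (EuclideanSpace ℝ (Fin N))), 0 ≤ wt x := by
    have h1 : ∀ᵐ x ∂(volume : Measure (EuclideanSpace ℝ (Fin N))), x ∈ Ω → 0 ≤ w x :=
      (ae_restrict_iff' hmeasΩ).1 hwpos
    filter_upwards [h1] with x hx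
    by_cases h : x ∈ Ω
    · simpa [hwt, Set.indicator_of_mem h] using hx h
    · simp [hwt, Set.indicator_of_notMem h]
  have hwtσ0 : ∀ᵐ x ∂(volume : Measure (EuclideanSpace ℝ (Fin N))), 0 ≤ wt (σf x) := by
    have h2 : volume (σf ⁻¹' {x | ¬ 0 ≤ wt x}) = 0 :=
      hmp.quasiMeasurePreserving.preimage_null (ae_iff.1 hwt0)
    rw [ae_iff]
    simpa [Set.preimage_setOf_eq] using h2
  have memH : ∀ y, ⟪y, u⟫ < c → (y ∈ Ω ∨ σf y ∈ Ω) → y ∈ Ω := by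
    intro y hy hmem
    rw [hΩ]
    left
    refine ⟨?_, hy⟩
    rcases hmem with h | h
    · exact Or.inl h
    · exact Or.inr ⟨σf y, h, hinv y⟩
  have hGval : ∀ y, G y = vt y * wt y := by
    intro y
    by_cases h : y ∈ Ω <;> simp [hG, hvt, hwt, Set.indicator, h]
  have key : ∀ᵐ x ∂(volume : Measure (EuclideanSpace ℝ (Fin N))),
      F x + F (σf x) ≤ G x + G (σf x) := by
    filter_upwards [hwt0, hwtσ0] with x hb hb'
    rw [hGval, hGval]
    rcases lt_trichotomy ⟪x, u⟫ c with ht | ht | ht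
    · -- x strictly inside H
      have hsnot : ¬ ⟪σf x, u⟫ < c := by rw [hinner]; linarith
      have hFx : F x = (if x ∈ Ω then
          min (vt (σf x)) (vt x) * max (wt x) (wt (σf x)) else 0) := by
        simp only [hF, Set.indicator_apply, polFun, ← hσdef, hinv, if_pos ht, if_neg hsnot]
      have hFsx : F (σf x) = (if σf x ∈ Ω then
          max (vt x) (vt (σf x)) * min (wt (σf x)) (wt x) else 0) := by
        simp only [hF, Set.indicator_apply, polFun, ← hσdef, hinv, if_pos ht, if_neg hsnot]
      rw [hFx, hFsx]
      by_cases hx : x ∈ Ω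
      · by_cases hsx : σf x ∈ Ω
        · simp only [if_pos hx, if_pos hsx]
          have h := rearr (vt x) (vt (σf x)) (wt x) (wt (σf x))
          rw [min_comm (vt (σf x)) (vt x), min_comm (wt (σf x)) (wt x)]
          linarith
        · have hv0 : vt (σf x) = 0 := Set.indicator_of_notMem hsx v
          have hw0 : wt (σf x) = 0 := Set.indicator_of_notMem hsx w
          simp only [if_pos hx, if_neg hsx, hv0, hw0]
          rw [min_comm, max_eq_left hb]
          have h := mul_le_mul_of_nonneg_right (min_le_left (vt x) 0) hb
          linarith
      · have hsx : σf x ∉ Ω := fun h => hx (memH x ht (Or.inr h))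
        have hv0 : vt x = 0 := Set.indicator_of_notMem hx v
        have hw0 : wt x = 0 := Set.indicator_of_notMem hx w
        have hv0' : vt (σf x) = 0 := Set.indicator_of_notMem hsx v
        have hw0' : wt (σf x) = 0 := Set.indicator_of_notMem hsx w
        simp [if_neg hx, if_neg hsx, hv0, hw0, hv0', hw0']
    · -- on the hyperplane: σf x = x
      have hfix : σf x = x := by
        have h2 : (2 * (⟪x, u⟫ - c)) = 0 := by rw [ht]; ring
        rw [hσdef]
        unfold reflHyp
        rw [h2, zero_smul, sub_zero]
      have hnot : ¬ ⟪x, u⟫ < c := by rw [ht]; exact lt_irrefl c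
      have hFx : F x = (if x ∈ Ω then vt x * wt x else 0) := by
        simp only [hF, Set.indicator_apply, polFun, ← hσdef, hfix, if_neg hnot, min_self]
      rw [hfix, hFx]
      by_cases hx : x ∈ Ω
      · simp [if_pos hx]
      · have hv0 : vt x = 0 := Set.indicator_of_notMem hx v
        simp [if_neg hx, hv0]
    · -- x strictly outside H
      have hs : ⟪σf x, u⟫ < c := by rw [hinner]; linarith
      have hnot : ¬ ⟪x, u⟫ < c := by linarith
      have hFx : F x = (if x ∈ Ω then
          max (vt (σf x)) (vt x) * min (wt x) (wt (σf x)) else 0) := by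
        simp only [hF, Set.indicator_apply, polFun, ← hσdef, hinv, if_pos hs, if_neg hnot]
      have hFsx : F (σf x) = (if σf x ∈ Ω then
          min (vt x) (vt (σf x)) * max (wt (σf x)) (wt x) else 0) := by
        simp only [hF, Set.indicator_apply, polFun, ← hσdef, hinv, if_pos hs, if_neg hnot]
      rw [hFx, hFsx]
      by_cases hx : x ∈ Ω
      · have hsx : σf x ∈ Ω := memH (σf x) hs (Or.inr (by rwa [hinv]))
        simp only [if_pos hx, if_pos hsx]
        have h := rearr (vt x) (vt (σf x)) (wt x) (wt (σf x))
        rw [max_comm (vt (σf x)) (vt x), max_comm (wt (σf x)) (wt x)]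
        linarith
      · by_cases hsx : σf x ∈ Ω
        · have hv0 : vt x = 0 := Set.indicator_of_notMem hx v
          have hw0 : wt x = 0 := Set.indicator_of_notMem hx w
          simp only [if_neg hx, if_pos hsx, hv0, hw0]
          rw [max_eq_left hb']
          have h := mul_le_mul_of_nonneg_right (min_le_right 0 (vt (σf x))) hb'
          linarith
        · have hv0 : vt x = 0 := Set.indicator_of_notMem hx v
          have hw0 : wt x = 0 := Set.indicator_of_notMem hx w
          have hv0' : vt (σf x) = 0 := Set.indicator_of_notMem hsx v
          have hw0' : wt (σf x) = 0 := Set.indicator_of_notMem hsx w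
          simp [if_neg hx, if_neg hsx, hv0, hw0, hv0', hw0']
  have hmono : ∫ x, (F x + F (σf x)) ≤ ∫ x, (G x + G (σf x)) :=
    integral_mono_ae (hFint.add hFσint) (hGint.add hGσint) key
  rw [integral_add hFint hFσint, integral_add hGint hGσint, hFeq, hGeq] at hmono
  have h1 : ∫ x in Ω, polFun u c (Ω.indicator v) (reflHyp u c x) * polFun u c (Ω.indicator w) x
      = ∫ x, F x := (integral_indicator hmeasΩ).symm
  have h2 : ∫ x in Ω, v x * w x = ∫ x, G x := (integral_indicator hmeasΩ).symm
  rw [h1, h2]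
  linarith
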